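/- Let g be a symmetric bilinear form on a real vector space V, W ∈ V, ε ∈ {1,−1}, and v ∈ V. Set h(v,v) = g(v,W)² + g(v,v)(1 − g(W,W)). Assume g(W,W) ≠ 1, h(v,v) > 0, and that Z := (g(v,W) − ε·√(h(v,v)))/(g(W,W) − 1) is positive. Then g(v/Z − W, v/Z − W) = 1; that is, Z = Z_ε(v) solves the Zermelo navigation equation for the metric g and the wind W. -/

import Mathlib

/-- If `g(W,W) ≠ 1`, `h(v,v) := g(v,W)² + g(v,v)(1 − g(W,W)) > 0` and
`Z := (g(v,W) − ε√(h(v,v)))/(g(W,W) − 1)` is positive, then `Z` solves the Zermelo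
navigation equation `g(v/Z − W, v/Z − W) = 1` for the metric `g` and wind `W`. -/
theorem stmt2 {V : Type*} [AddCommGroup V] [Module ℝ V]
    (g : V →ₗ[ℝ] V →ₗ[ℝ] ℝ) (hgsym : ∀ x y : V, g x y = g y x)
    (W v : V) (ε : ℝ) (hε : ε = 1 ∨ ε = -1)
    (hW : g W W ≠ 1)
    (h : ℝ) (hh : h = (g v W) ^ 2 + g v v * (1 - g W W)) (hhpos : 0 < h)
    (Z : ℝ) (hZ : Z = (g v W - ε * Real.sqrt h) / (g W W - 1)) (hZpos : 0 < Z) :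
    g (Z⁻¹ • v - W) (Z⁻¹ • v - W) = 1 := by
  have hc : g W W - 1 ≠ 0 := sub_ne_zero.mpr hW
  have hZc : Z * (g W W - 1) = g v W - ε * Real.sqrt h := by
    field_simp at hZ; linarith [hZ]
  have hs : Real.sqrt h ^ 2 = h := Real.sq_sqrt hhpos.le
  have hε2 : ε ^ 2 = 1 := by rcases hε with rfl | rfl <;> norm_num
  have hZne : Z ≠ 0 := ne_of_gt hZpos
  -- quadratic identity
  have key : Z ^ 2 * (g W W - 1) - 2 * (g v W) * Z + g v v = 0 := by
    have hsq : (Z * (g W W - 1)) ^ 2 = (g v W - ε * Real.sqrt h) ^ 2 := by rw [hZc]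
    have h1 : Z ^ 2 * (g W W - 1) ^ 2 =
        -(g v W) ^ 2 + 2 * g v W * (Z * (g W W - 1)) + h := by
      linear_combination hsq - 2 * (g v W) * hZc + Real.sqrt h ^ 2 * hε2 + hs
    apply mul_left_cancel₀ hc
    rw [hh] at h1
    linear_combination h1
  simp only [map_sub, map_smul, LinearMap.sub_apply, LinearMap.smul_apply, smul_eq_mul]
  rw [hgsym W v]
  field_simp
  linear_combination key
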